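/- If a graph G is vertex-2-connected, then for any three distinct vertices v1, v2, v3 of G there is a K_3 minor whose three branch sets contain v1, v2, v3 respectively; equivalently, there is a cycle through connecting structure realizing a topological triangle on {v1, v2, v3}. -/

import Mathlib

open SimpleGraph

/-- `B` is a system of branch sets witnessing a `K_n` minor in `G`:
nonempty, connected, pairwise disjoint sets with an edge between any two of them. -/
def IsCompleteMinorWitness {V : Type*} (G : SimpleGraph V) (n : ℕ)
    (B : Fin n → Set V) : Prop :=
  (∀ i, (B i).Nonempty) ∧ (∀ i, (G.induce (B i)).Connected) ∧
  (∀ i j, i ≠ j → Disjoint (B i) (B j)) ∧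
  (∀ i j, i ≠ j → ∃ u ∈ B i, ∃ v ∈ B j, G.Adj u v)

/-- `G` contains a complete minor `K_n`. -/
def HasCompleteMinor {V : Type*} (G : SimpleGraph V) (n : ℕ) : Prop :=
  ∃ B : Fin n → Set V, IsCompleteMinorWitness G n B

/-- `A`, `B` are systems of branch sets witnessing a complete bipartite `K_{m,n}`
minor in `G`. -/
def IsBipartiteMinorWitness {V : Type*} (G : SimpleGraph V) (m n : ℕ)
    (A : Fin m → Set V) (B : Fin n → Set V) : Prop :=
  (∀ i, (A i).Nonempty) ∧ (∀ j, (B j).Nonempty) ∧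
  (∀ i, (G.induce (A i)).Connected) ∧ (∀ j, (G.induce (B j)).Connected) ∧
  (∀ i j, i ≠ j → Disjoint (A i) (A j)) ∧
  (∀ i j, i ≠ j → Disjoint (B i) (B j)) ∧
  (∀ i j, Disjoint (A i) (B j)) ∧
  (∀ i j, ∃ u ∈ A i, ∃ v ∈ B j, G.Adj u v)

/-- `G` contains a complete bipartite minor `K_{m,n}`. -/
def HasBipartiteMinor {V : Type*} (G : SimpleGraph V) (m n : ℕ) : Prop :=
  ∃ (A : Fin m → Set V) (B : Fin n → Set V), IsBipartiteMinorWitness G m n A B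

/-- Wagner characterization: a graph is planar iff it has no `K_5` and no `K_{3,3}` minor. -/
def IsPlanar {V : Type*} (G : SimpleGraph V) : Prop :=
  ¬ HasCompleteMinor G 5 ∧ ¬ HasBipartiteMinor G 3 3

/-- Minor characterization of outerplanarity: no `K_4` and no `K_{2,3}` minor. -/
def IsOuterplanar {V : Type*} (G : SimpleGraph V) : Prop :=
  ¬ HasCompleteMinor G 4 ∧ ¬ HasBipartiteMinor G 2 3


/-- `G` remains connected after deleting any single vertex. -/
def TwoConnected {V : Type*} (G : SimpleGraph V) : Prop :=
  ∀ v : V, (G.induce {v}ᶜ).Connected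

namespace K3Aux


variable {V : Type*} {G : SimpleGraph V}

lemma reachable_induce_of_walk {s : Set V} {a b : V} (w : G.Walk a b)
    (hs : ∀ x ∈ w.support, x ∈ s) :
    (G.induce s).Reachable ⟨a, hs a w.start_mem_support⟩ ⟨b, hs b w.end_mem_support⟩ := by
  induction w with
  | nil => exact Reachable.refl _
  | @cons a c d h p ih =>
      have ha : a ∈ s := hs a (by simp)
      have hc : c ∈ s := hs c (by simp)
      have hadj : (G.induce s).Adj ⟨a, ha⟩ ⟨c, hc⟩ := h
      exact hadj.reachable.trans (ih fun x hx => hs x (by simp [hx]))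

lemma connected_induce_support {a b : V} (w : G.Walk a b) :
    (G.induce {x | x ∈ w.support}).Connected := by
  classical
  rw [connected_iff]
  refine ⟨?_, ⟨⟨a, w.start_mem_support⟩⟩⟩
  have key : ∀ u (hu : u ∈ w.support),
      (G.induce {x | x ∈ w.support}).Reachable ⟨a, w.start_mem_support⟩ ⟨u, hu⟩ := fun u hu =>
    reachable_induce_of_walk (w.takeUntil u hu)
      (fun x hx => w.support_takeUntil_subset hu hx)
  rintro ⟨u, hu⟩ ⟨v, hv⟩
  exact (key u hu).symm.trans (key v hv)

/-- The "branch set" of `v1`: vertices off `S` reachable from `v1` outside `S`. -/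
def comp0 (G : SimpleGraph V) (S : Set V) (v1 : V) (hv1 : v1 ∉ S) : Set V :=
  {b | ∃ hb : b ∉ S, (G.induce Sᶜ).Reachable ⟨v1, hv1⟩ ⟨b, hb⟩}

lemma v1_mem_comp0 {S : Set V} {v1 : V} (hv1 : v1 ∉ S) : v1 ∈ comp0 G S v1 hv1 :=
  ⟨hv1, Reachable.refl _⟩

lemma comp0_connected (G : SimpleGraph V) (S : Set V) (v1 : V) (hv1 : v1 ∉ S) :
    (G.induce (comp0 G S v1 hv1)).Connected := by
  classical
  rw [connected_iff]
  refine ⟨?_, ⟨⟨v1, v1_mem_comp0 hv1⟩⟩⟩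
  have key : ∀ (b : V) (hb : b ∈ comp0 G S v1 hv1),
      (G.induce (comp0 G S v1 hv1)).Reachable ⟨v1, v1_mem_comp0 hv1⟩ ⟨b, hb⟩ := by
    rintro b ⟨hbS, hbr⟩
    obtain ⟨w⟩ := hbr
    have hsup : ∀ x ∈ (w.map (Embedding.induce Sᶜ).toHom).support, x ∈ comp0 G S v1 hv1 := by
      intro z hz
      rw [Walk.support_map] at hz
      obtain ⟨z', hz', rfl⟩ := List.mem_map.mp hz
      exact ⟨z'.2, (w.takeUntil z' hz').reachable⟩
    exact reachable_induce_of_walk (w.map (Embedding.induce Sᶜ).toHom) hsup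
  rintro ⟨b, hb⟩ ⟨c, hc⟩
  exact (key b hb).symm.trans (key c hc)

lemma attach {S : Set V} {v1 : V} (hv1 : v1 ∉ S) {a t : V} (w : G.Walk a t) :
    ∀ (ha : a ∉ S), (G.induce Sᶜ).Reachable ⟨v1, hv1⟩ ⟨a, ha⟩ → t ∈ S →
    ∃ p, p ∈ S ∧ p ∈ w.support ∧ ∃ b, b ∈ comp0 G S v1 hv1 ∧ G.Adj b p := by
  induction w with
  | nil => exact fun ha _ ht => absurd ht ha
  | @cons a c d h p ih =>
      intro ha hr ht
      by_cases hc : c ∈ S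
      · exact ⟨c, hc, by simp, a, ⟨ha, hr⟩, h⟩
      · have hadj : (G.induce Sᶜ).Adj ⟨a, ha⟩ ⟨c, hc⟩ := h
        obtain ⟨p', hp'S, hsupp, rest⟩ := ih hc (hr.trans hadj.reachable) ht
        exact ⟨p', hp'S, by simp [hsupp], rest⟩

lemma order [DecidableEq V] {u v p q : V} (P : G.Walk u v) (hpq : p ≠ q) :
    ∀ (hp : p ∈ P.support) (hq : q ∈ P.support),
    q ∈ (P.dropUntil p hp).support.tail ∨ p ∈ (P.dropUntil q hq).support.tail := by
  induction P with
  | nil =>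
      intro hp hq
      rw [Walk.mem_support_nil_iff] at hp hq
      exact absurd (hp.trans hq.symm) hpq
  | @cons a c d h P ih =>
      intro hp hq
      by_cases hap : a = p
      · subst hap
        left
        have he : (Walk.cons h P).dropUntil a hp = Walk.cons h P := by
          simp [Walk.dropUntil]
        rw [he]
        have := List.mem_cons.mp (by simpa using hq)
        simpa using this.resolve_left (fun hh => hpq hh.symm)
      · by_cases haq : a = q
        · subst haq
          right
          have he : (Walk.cons h P).dropUntil a hq = Walk.cons h P := by
            simp [Walk.dropUntil]
          rw [he]
          have := List.mem_cons.mp (by simpa using hp)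
          simpa using this.resolve_left (fun hh => hpq hh)
        · have hp' : p ∈ P.support :=
            (List.mem_cons.mp (by simpa using hp)).resolve_left (fun hh => hap hh.symm)
          have hq' : q ∈ P.support :=
            (List.mem_cons.mp (by simpa using hq)).resolve_left (fun hh => haq hh.symm)
          have e1 : (Walk.cons h P).dropUntil p hp = P.dropUntil p hp' := by
            simp [Walk.dropUntil, hap]
          have e2 : (Walk.cons h P).dropUntil q hq = P.dropUntil q hq' := by
            simp [Walk.dropUntil, haq]
          rw [e1, e2]
          exact ih hp' hq'

lemma aux_walk {x v3 y : V} (R : G.Walk x v3) (hy : y ∈ R.support.tail) :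
    ∃ (c : V) (R' : G.Walk c v3), G.Adj x c ∧ R.support.tail = R'.support := by
  cases R with
  | nil => simp at hy
  | cons h R' => exact ⟨_, R', h, by simp⟩

lemma build [DecidableEq V] {v1 v2 v3 x y bx bY : V} {P : G.Walk v2 v3}
    (hP : P.IsPath) (hv1 : v1 ∉ {z | z ∈ P.support})
    (hx : x ∈ P.support) (hy : y ∈ (P.dropUntil x hx).support.tail)
    (hbx : bx ∈ comp0 G {z | z ∈ P.support} v1 hv1)
    (hbY : bY ∈ comp0 G {z | z ∈ P.support} v1 hv1)
    (hax : G.Adj bx x) (hay : G.Adj bY y) :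
    ∃ B : Fin 3 → Set V, IsCompleteMinorWitness G 3 B ∧
      v1 ∈ B 0 ∧ v2 ∈ B 1 ∧ v3 ∈ B 2 := by
  obtain ⟨c, R', hadj, htail⟩ := aux_walk (P.dropUntil x hx) hy
  set S : Set V := {z | z ∈ P.support} with hS
  set Q : G.Walk v2 x := P.takeUntil x hx with hQ
  have hdec : P.support = Q.support ++ (P.dropUntil x hx).support.tail := by
    rw [← Walk.support_append, P.take_spec hx]
  have hnd : (Q.support ++ R'.support).Nodup := by
    rw [← htail, ← hdec]; exact hP.support_nodup
  have hldisj : List.Disjoint Q.support R'.support := List.disjoint_of_nodup_append hnd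
  have hQsub : ∀ z ∈ Q.support, z ∈ S := fun z hz => P.support_takeUntil_subset hx hz
  have hRsub : ∀ z ∈ R'.support, z ∈ S := fun z hz => by
    show z ∈ P.support
    rw [hdec, htail]; exact List.mem_append_right _ hz
  have hyR' : y ∈ R'.support := by rw [← htail]; exact hy
  -- the three branch sets
  refine ⟨![comp0 G S v1 hv1, {z | z ∈ Q.support}, {z | z ∈ R'.support}],
    ⟨?_, ?_, ?_, ?_⟩, ?_, ?_, ?_⟩
  · intro i
    fin_cases i
    · exact ⟨v1, v1_mem_comp0 hv1⟩
    · exact ⟨v2, Q.start_mem_support⟩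
    · exact ⟨v3, R'.end_mem_support⟩
  · intro i
    fin_cases i
    · exact comp0_connected G S v1 hv1
    · exact connected_induce_support Q
    · exact connected_induce_support R'
  · have hd01 : Disjoint (comp0 G S v1 hv1) {z | z ∈ Q.support} :=
      Set.disjoint_left.mpr (by rintro z ⟨hzS, -⟩ hz1; exact hzS (hQsub z hz1))
    have hd02 : Disjoint (comp0 G S v1 hv1) {z | z ∈ R'.support} :=
      Set.disjoint_left.mpr (by rintro z ⟨hzS, -⟩ hz2; exact hzS (hRsub z hz2))
    have hd12 : Disjoint {z | z ∈ Q.support} {z | z ∈ R'.support} :=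
      Set.disjoint_left.mpr (fun z hz1 hz2 => hldisj hz1 hz2)
    intro i j hij
    fin_cases i <;> fin_cases j <;>
      simp_all <;>
      first
        | exact hd01 | exact hd02 | exact hd12
        | exact hd01.symm | exact hd02.symm | exact hd12.symm
  · have e01 : ∃ u ∈ comp0 G S v1 hv1, ∃ w ∈ {z | z ∈ Q.support}, G.Adj u w :=
      ⟨bx, hbx, x, Q.end_mem_support, hax⟩
    have e02 : ∃ u ∈ comp0 G S v1 hv1, ∃ w ∈ {z | z ∈ R'.support}, G.Adj u w :=
      ⟨bY, hbY, y, hyR', hay⟩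
    have e12 : ∃ u ∈ {z | z ∈ Q.support}, ∃ w ∈ {z | z ∈ R'.support}, G.Adj u w :=
      ⟨x, Q.end_mem_support, c, R'.start_mem_support, hadj⟩
    have e10 : ∃ u ∈ {z | z ∈ Q.support}, ∃ w ∈ comp0 G S v1 hv1, G.Adj u w :=
      ⟨x, Q.end_mem_support, bx, hbx, hax.symm⟩
    have e20 : ∃ u ∈ {z | z ∈ R'.support}, ∃ w ∈ comp0 G S v1 hv1, G.Adj u w :=
      ⟨y, hyR', bY, hbY, hay.symm⟩
    have e21 : ∃ u ∈ {z | z ∈ R'.support}, ∃ w ∈ {z | z ∈ Q.support}, G.Adj u w :=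
      ⟨c, R'.start_mem_support, x, Q.end_mem_support, hadj.symm⟩
    intro i j hij
    fin_cases i <;> fin_cases j <;> simp_all <;>
      first
        | exact e01 | exact e02 | exact e12
        | exact e10 | exact e20 | exact e21
  · exact v1_mem_comp0 hv1
  · exact Q.start_mem_support
  · exact R'.end_mem_support


end K3Aux

open K3Aux in
/-- In a 2-connected graph with at least 3 vertices, any three distinct vertices
carry a `K_3` minor whose three branch sets contain them respectively. -/
theorem k3_minor_on_three_vertices {V : Type*} [Fintype V] (G : SimpleGraph V)
    (h2 : TwoConnected G) (hcard : 3 ≤ Fintype.card V)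
    (v1 v2 v3 : V) (h12 : v1 ≠ v2) (h13 : v1 ≠ v3) (h23 : v2 ≠ v3) :
    ∃ B : Fin 3 → Set V, IsCompleteMinorWitness G 3 B ∧
      v1 ∈ B 0 ∧ v2 ∈ B 1 ∧ v3 ∈ B 2 := by
  classical
  -- a path from v2 to v3 avoiding v1
  have hv2 : v2 ∈ ({v1}ᶜ : Set V) := by simp [Ne.symm h12]
  have hv3 : v3 ∈ ({v1}ᶜ : Set V) := by simp [Ne.symm h13]
  obtain ⟨w0⟩ := (h2 v1).preconnected ⟨v2, hv2⟩ ⟨v3, hv3⟩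
  set W : G.Walk v2 v3 := w0.map (Embedding.induce {v1}ᶜ).toHom with hWdef
  have hWsup : ∀ z ∈ W.support, z ≠ v1 := by
    intro z hz
    replace hz : z ∈ (w0.map (Embedding.induce ({v1}ᶜ : Set V)).toHom).support := hz
    rw [Walk.support_map] at hz
    obtain ⟨z', -, rfl⟩ := List.mem_map.mp hz
    exact fun hh => z'.2 hh
  set P : G.Walk v2 v3 := W.bypass with hPdef
  have hPpath : P.IsPath := W.bypass_isPath
  have hv1P : v1 ∉ P.support := fun hmem =>
    (hWsup v1 (W.support_bypass_subset hmem)) rfl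
  have hv1S : v1 ∉ {z | z ∈ P.support} := hv1P
  -- first attachment point
  have hv1c3 : v1 ∈ ({v3}ᶜ : Set V) := by simp [h13]
  have hv2c3 : v2 ∈ ({v3}ᶜ : Set V) := by simp [h23]
  obtain ⟨u1⟩ := (h2 v3).preconnected ⟨v1, hv1c3⟩ ⟨v2, hv2c3⟩
  have w1 : G.Walk v1 v2 := u1.map (Embedding.induce {v3}ᶜ).toHom
  obtain ⟨p1, hp1S, -, b1, hb1, hab1⟩ :=
    attach (G := G) hv1S w1 hv1S (Reachable.refl _) (P.start_mem_support)
  have hp1P : p1 ∈ P.support := hp1S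
  have hp1v1 : v1 ≠ p1 := fun h => hv1S (h ▸ hp1S)
  -- target distinct from p1
  obtain ⟨t, htS, htp1 : t ≠ p1, -⟩ :
      ∃ t, t ∈ {z | z ∈ P.support} ∧ t ≠ p1 ∧ t ≠ v1 := by
    by_cases hp12 : p1 = v2
    · exact ⟨v3, P.end_mem_support, by rw [hp12]; exact h23.symm, h13.symm⟩
    · exact ⟨v2, P.start_mem_support, fun h => hp12 h.symm, h12.symm⟩
  have hv1cp : v1 ∈ ({p1}ᶜ : Set V) := by simp [hp1v1]
  have htcp : t ∈ ({p1}ᶜ : Set V) := by simp [htp1]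
  obtain ⟨u2⟩ := (h2 p1).preconnected ⟨v1, hv1cp⟩ ⟨t, htcp⟩
  set w2 : G.Walk v1 t := u2.map (Embedding.induce {p1}ᶜ).toHom with hw2def
  have hw2sup : ∀ z ∈ w2.support, z ≠ p1 := by
    intro z hz
    replace hz : z ∈ (u2.map (Embedding.induce ({p1}ᶜ : Set V)).toHom).support := hz
    rw [Walk.support_map] at hz
    obtain ⟨z', -, rfl⟩ := List.mem_map.mp hz
    exact fun hh => z'.2 hh
  obtain ⟨p2, hp2S, hp2w2, b2, hb2, hab2⟩ :=
    attach (G := G) hv1S w2 hv1S (Reachable.refl _) htS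
  have hp2P : p2 ∈ P.support := hp2S
  have hp1p2 : p1 ≠ p2 := fun h => (hw2sup p2 hp2w2) h.symm
  rcases order P hp1p2 hp1P hp2P with h | h
  · exact build hPpath hv1S hp1P h hb1 hb2 hab1 hab2
  · exact build hPpath hv1S hp2P h hb2 hb1 hab2 hab1
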